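/- Let ψ : ℝ^{K-1} → ℝ be differentiable and satisfy the following lower exponential-tail bound: there exist u_- ∈ ℝ and c > 0 such that whenever min_j u_j > u_-, for every i one has -∂ψ/∂u_i(u) ≥ c(1 - Σ_j exp(-u_j)) exp(-u_i). Suppose additionally ψ is convex and symmetric. If (u^t)_{t≥1} is a sequence in ℝ^{K-1} with ∇ψ(u^t) → 0 as t → ∞, then for every coordinate j ∈ [K-1], u^t_j → ∞. -/

import Mathlib

open Filter Real

section aux
variable {n : ℕ} {ψ : (Fin n → ℝ) → ℝ}

lemma line_hasDerivAt (hdiff : Differentiable ℝ ψ) (x v : Fin n → ℝ) (t : ℝ) :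
    HasDerivAt (fun s : ℝ => ψ (x + s • v)) (fderiv ℝ ψ (x + t • v) v) t := by
  have h1 : HasDerivAt (fun s : ℝ => x + s • v) v t := by
    simpa using ((hasDerivAt_id t).smul_const v).const_add x
  exact (hdiff (x + t • v)).hasFDerivAt.comp_hasDerivAt t h1

lemma line_convex (hconv : ConvexOn ℝ Set.univ ψ) (x v : Fin n → ℝ) :
    ConvexOn ℝ Set.univ (fun s : ℝ => ψ (x + s • v)) := by
  have := hconv.comp_affineMap (AffineMap.lineMap x (x + v))
  have he : (fun s : ℝ => ψ (x + s • v)) = ψ ∘ (AffineMap.lineMap x (x + v)) := by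
    funext s
    simp [AffineMap.lineMap_apply, add_comm]
  rw [he]
  simpa using this

lemma grad_mono (hdiff : Differentiable ℝ ψ) (hconv : ConvexOn ℝ Set.univ ψ)
    (x d : Fin n → ℝ) :
    fderiv ℝ ψ x d ≤ fderiv ℝ ψ (x + d) d := by
  set g := fun s : ℝ => ψ (x + s • d) with hg
  have hmono : MonotoneOn (deriv g) Set.univ :=
    (line_convex hconv x d).monotoneOn_deriv
      (fun s _ => (line_hasDerivAt hdiff x d s).differentiableAt)
  have h0 : deriv g 0 = fderiv ℝ ψ x d := by
    have := (line_hasDerivAt hdiff x d 0).deriv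
    simpa using this
  have h1 : deriv g 1 = fderiv ℝ ψ (x + d) d := by
    have := (line_hasDerivAt hdiff x d 1).deriv
    simpa using this
  have := hmono (Set.mem_univ 0) (Set.mem_univ 1) zero_le_one
  rwa [h0, h1] at this

lemma sym_fderiv (hdiff : Differentiable ℝ ψ)
    (hsym : ∀ (σ : Equiv.Perm (Fin n)) (u : Fin n → ℝ), ψ (u ∘ σ) = ψ u)
    (σ : Equiv.Perm (Fin n)) (x w : Fin n → ℝ) :
    fderiv ℝ ψ (x ∘ σ) (w ∘ σ) = fderiv ℝ ψ x w := by
  set L : (Fin n → ℝ) →L[ℝ] (Fin n → ℝ) :=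
    LinearMap.toContinuousLinearMap (LinearMap.funLeft ℝ ℝ σ) with hL
  have hLapp : ∀ y : Fin n → ℝ, L y = y ∘ σ := fun y => rfl
  have hcomp : (fun y => ψ (L y)) = ψ := by
    funext y
    rw [hLapp]
    exact hsym σ y
  have hfd : HasFDerivAt (fun y => ψ (L y)) ((fderiv ℝ ψ (L x)).comp L) x :=
    (hdiff (L x)).hasFDerivAt.comp x L.hasFDerivAt
  rw [hcomp] at hfd
  have := hfd.fderiv
  calc fderiv ℝ ψ (x ∘ σ) (w ∘ σ) = ((fderiv ℝ ψ (L x)).comp L) w := rfl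
    _ = fderiv ℝ ψ x w := by rw [← this]

lemma single_comp_swap {i k : Fin n} (hik : i ≠ k) :
    (Pi.single k (1:ℝ)) ∘ (Equiv.swap i k) = Pi.single i 1 := by
  funext m
  simp only [Function.comp_apply, Pi.single_apply]
  rcases eq_or_ne m i with rfl | hmi
  · simp [Equiv.swap_apply_left]
  rcases eq_or_ne m k with rfl | hmk
  · simp [Equiv.swap_apply_right, hik, (Ne.symm hik)]
  · simp [Equiv.swap_apply_of_ne_of_ne hmi hmk, hmi, hmk, Ne.symm hmk]

lemma partial_eq_of_eq (hdiff : Differentiable ℝ ψ)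
    (hsym : ∀ (σ : Equiv.Perm (Fin n)) (u : Fin n → ℝ), ψ (u ∘ σ) = ψ u)
    {x : Fin n → ℝ} {i k : Fin n} (h : x i = x k) :
    fderiv ℝ ψ x (Pi.single i 1) = fderiv ℝ ψ x (Pi.single k 1) := by
  rcases eq_or_ne i k with rfl | hik
  · rfl
  have hx : x ∘ (Equiv.swap i k) = x := by
    funext m
    rcases eq_or_ne m i with rfl | hmi
    · simp [Equiv.swap_apply_left, h]
    rcases eq_or_ne m k with rfl | hmk
    · simp [Equiv.swap_apply_right, h]
    · simp [Equiv.swap_apply_of_ne_of_ne hmi hmk]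
  have := sym_fderiv hdiff hsym (Equiv.swap i k) x (Pi.single k 1)
  rw [hx, single_comp_swap hik] at this
  exact this

lemma partial_le_of_le (hdiff : Differentiable ℝ ψ) (hconv : ConvexOn ℝ Set.univ ψ)
    (hsym : ∀ (σ : Equiv.Perm (Fin n)) (u : Fin n → ℝ), ψ (u ∘ σ) = ψ u)
    {x : Fin n → ℝ} {i k : Fin n} (h : x i ≤ x k) :
    fderiv ℝ ψ x (Pi.single i 1) ≤ fderiv ℝ ψ x (Pi.single k 1) := by
  rcases eq_or_ne i k with rfl | hik
  · rfl
  rcases eq_or_lt_of_le h with heq | hlt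
  · exact (partial_eq_of_eq hdiff hsym heq).le
  have hxd : x + (x k - x i) • ((Pi.single i 1 - Pi.single k 1 : Fin n → ℝ)) = x ∘ (Equiv.swap i k) := by
    funext m
    simp only [Pi.add_apply, Pi.smul_apply, Pi.sub_apply, Function.comp_apply,
      Pi.single_apply, smul_eq_mul]
    rcases eq_or_ne m i with rfl | hmi
    · simp [Equiv.swap_apply_left, hik]
    rcases eq_or_ne m k with rfl | hmk
    · simp [Equiv.swap_apply_right, Ne.symm hik]
    · simp [Equiv.swap_apply_of_ne_of_ne hmi hmk, hmi, hmk]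
  have hmono := grad_mono hdiff hconv x
    ((x k - x i) • ((Pi.single i 1 - Pi.single k 1 : Fin n → ℝ)))
  rw [map_smul, map_smul, hxd] at hmono
  have hsw : fderiv ℝ ψ (x ∘ (Equiv.swap i k)) ((Pi.single i 1 - Pi.single k 1 : Fin n → ℝ))
      = - fderiv ℝ ψ x ((Pi.single i 1 - Pi.single k 1 : Fin n → ℝ)) := by
    have h1 := sym_fderiv hdiff hsym (Equiv.swap i k) x ((Pi.single k 1 - Pi.single i 1 : Fin n → ℝ))
    have h2 : ((Pi.single k 1 - Pi.single i 1 : Fin n → ℝ)) ∘ (Equiv.swap i k)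
        = ((Pi.single i 1 - Pi.single k 1 : Fin n → ℝ)) := by
      funext m
      have e1 := congrFun (single_comp_swap (n := n) hik) m
      have e2 := congrFun (single_comp_swap (n := n) (Ne.symm hik)) m
      simp only [Function.comp_apply, Pi.sub_apply] at e1 e2 ⊢
      rw [e1, Equiv.swap_comm i k, e2]
    rw [h2] at h1
    rw [h1, map_sub, map_sub]
    ring
  rw [hsw] at hmono
  have hA : fderiv ℝ ψ x ((Pi.single i 1 - Pi.single k 1 : Fin n → ℝ)) ≤ 0 := by
    have hd : (0:ℝ) < x k - x i := by linarith
    set A := fderiv ℝ ψ x ((Pi.single i 1 - Pi.single k 1 : Fin n → ℝ)) with hA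
    simp only [smul_eq_mul] at hmono
    nlinarith
  have hexp : fderiv ℝ ψ x ((Pi.single i 1 - Pi.single k 1 : Fin n → ℝ))
      = fderiv ℝ ψ x (Pi.single i 1) - fderiv ℝ ψ x (Pi.single k 1) := map_sub _ _ _
  linarith [hexp ▸ hA]

lemma fderiv_expand (hdiff : Differentiable ℝ ψ) (x d : Fin n → ℝ) :
    fderiv ℝ ψ x d = ∑ k, d k * fderiv ℝ ψ x (Pi.single k 1) := by
  have hsingle : ∀ k : Fin n, (fun j => if k = j then (1:ℝ) else 0) = Pi.single k 1 := by
    intro k; funext j; rw [Pi.single_apply]; simp [eq_comm]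
  have := LinearMap.pi_apply_eq_sum_univ ((fderiv ℝ ψ x) : (Fin n → ℝ) →ₗ[ℝ] ℝ) d
  simpa only [ContinuousLinearMap.coe_coe, smul_eq_mul, hsingle] using this

lemma boost (hdiff : Differentiable ℝ ψ) (hconv : ConvexOn ℝ Set.univ ψ)
    (hsym : ∀ (σ : Equiv.Perm (Fin n)) (u : Fin n → ℝ), ψ (u ∘ σ) = ψ u)
    (x : Fin n → ℝ) (C : ℝ) {i : Fin n} (hi : ∀ k, x i ≤ x k) :
    fderiv ℝ ψ x (Pi.single i 1) ≤
      fderiv ℝ ψ (fun k => max (x k) C) (Pi.single i 1) := by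
  by_cases hC : C ≤ x i
  · have : (fun k => max (x k) C) = x := by
      funext k; exact max_eq_left (hC.trans (hi k))
    rw [this]
  push_neg at hC
  set v : Fin n → ℝ := fun k => max (x k) C with hv
  set d : Fin n → ℝ := fun k => max (x k) C - x k with hdd
  have hd0 : ∀ k, 0 ≤ d k := fun k => by simp [hdd]
  have hvi : v i = C := by simp [hv, max_eq_right hC.le]
  have hS : 0 < ∑ k, d k := by
    have hdi : 0 < d i := by
      simp only [hdd, sub_pos]
      exact lt_of_lt_of_le hC (le_max_right _ _)
    exact lt_of_lt_of_le hdi (Finset.single_le_sum (f := d) (fun k _ => hd0 k) (Finset.mem_univ i))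
  have hxd : x + d = v := by funext k; simp [hdd, hv]
  have h1 : (∑ k, d k) * fderiv ℝ ψ x (Pi.single i 1) ≤ fderiv ℝ ψ x d := by
    conv_rhs => rw [fderiv_expand hdiff]
    rw [Finset.sum_mul]
    apply Finset.sum_le_sum
    intro k _
    exact mul_le_mul_of_nonneg_left (partial_le_of_le hdiff hconv hsym (hi k)) (hd0 k)
  have h2 : fderiv ℝ ψ v d = (∑ k, d k) * fderiv ℝ ψ v (Pi.single i 1) := by
    conv_lhs => rw [fderiv_expand hdiff]
    rw [Finset.sum_mul]
    refine Finset.sum_congr rfl fun k _ => ?_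
    rcases le_or_gt (x k) C with hkC | hkC
    · have : v k = v i := by rw [hvi]; simp [hv, max_eq_right hkC]
      rw [partial_eq_of_eq hdiff hsym this]
    · have : d k = 0 := by simp [hdd, max_eq_left hkC.le]
      rw [this]; ring
  have h3 : fderiv ℝ ψ x d ≤ fderiv ℝ ψ v d := by
    have := grad_mono hdiff hconv x d
    rwa [hxd] at this
  have := h1.trans (h3.trans h2.le)
  exact le_of_mul_le_mul_left this hS

end aux

/-- If a convex, symmetric, differentiable template satisfies the lower exponential-tail
bound and the gradients along a sequence tend to zero, then every coordinate of the
sequence tends to infinity. -/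
theorem stmt17 (K : ℕ) (hK : 2 ≤ K)
    (ψ : (Fin (K-1) → ℝ) → ℝ)
    (hdiff : Differentiable ℝ ψ)
    (hconv : ConvexOn ℝ Set.univ ψ)
    (hsym : ∀ (σ : Equiv.Perm (Fin (K-1))) (u : Fin (K-1) → ℝ), ψ (u ∘ σ) = ψ u)
    (um c : ℝ) (hc : 0 < c)
    (htail : ∀ u : Fin (K-1) → ℝ, (∀ j, um < u j) → ∀ i,
      c * (1 - ∑ j, Real.exp (-(u j))) * Real.exp (-(u i))
        ≤ -(fderiv ℝ ψ u (Pi.single i 1)))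
    (u : ℕ → Fin (K-1) → ℝ)
    (hgrad : ∀ i, Filter.Tendsto (fun t => fderiv ℝ ψ (u t) (Pi.single i 1))
      Filter.atTop (nhds 0)) :
    ∀ j, Filter.Tendsto (fun t => u t j) Filter.atTop Filter.atTop := by
  intro j
  rw [Filter.tendsto_atTop]
  intro b
  have hn : 0 < K - 1 := by omega
  haveI : Nonempty (Fin (K-1)) := ⟨⟨0, hn⟩⟩
  have hKpos : (0:ℝ) < 2 * (K-1 : ℕ) := by
    have : (0:ℝ) < (K-1 : ℕ) := by exact_mod_cast hn
    linarith
  set C : ℝ := max (max um b) (Real.log (2 * (K-1 : ℕ))) + 1 with hCdef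
  have hum : um < C := by
    have : um ≤ max (max um b) (Real.log (2 * (K-1 : ℕ))) :=
      le_trans (le_max_left um b) (le_max_left _ _)
    linarith
  have hbC : b ≤ C := by
    have : b ≤ max (max um b) (Real.log (2 * (K-1 : ℕ))) :=
      le_trans (le_max_right um b) (le_max_left _ _)
    linarith
  have hexpC : Real.exp (-C) ≤ 1 / (2 * (K-1 : ℕ)) := by
    have h1 : Real.log (2 * (K-1 : ℕ)) ≤ C := by
      have := le_max_right (max um b) (Real.log (2 * (K-1 : ℕ))); linarith
    calc Real.exp (-C) ≤ Real.exp (-(Real.log (2 * (K-1 : ℕ)))) :=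
          Real.exp_le_exp.2 (by linarith)
      _ = 1 / (2 * (K-1 : ℕ)) := by
          rw [Real.exp_neg, Real.exp_log hKpos, one_div]
  have hsumb : ∀ v : Fin (K-1) → ℝ, (∀ k, C ≤ v k) →
      (1:ℝ)/2 ≤ 1 - ∑ k, Real.exp (-(v k)) := by
    intro v hv
    have h1 : ∑ k, Real.exp (-(v k)) ≤ ∑ _k : Fin (K-1), Real.exp (-C) := by
      apply Finset.sum_le_sum
      intro k _
      exact Real.exp_le_exp.2 (by linarith [hv k])
    have h2 : ∑ _k : Fin (K-1), Real.exp (-C) = (K-1 : ℕ) * Real.exp (-C) := by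
      rw [Finset.sum_const, Finset.card_univ, Fintype.card_fin, nsmul_eq_mul]
    have h3 : (K-1 : ℕ) * Real.exp (-C) ≤ (K-1 : ℕ) * (1 / (2 * (K-1 : ℕ))) := by
      apply mul_le_mul_of_nonneg_left hexpC
      positivity
    have hne : ((K-1 : ℕ) : ℝ) ≠ 0 := by
      have : (0:ℝ) < (K-1 : ℕ) := by exact_mod_cast hn
      exact ne_of_gt this
    have hK1 : (1:ℝ) ≤ (K:ℝ) - 1 := by
      have : (2:ℝ) ≤ (K:ℝ) := by exact_mod_cast hK
      linarith
    have h4 : ((K-1 : ℕ) : ℝ) * (1 / (2 * ((K-1 : ℕ) : ℝ))) = 1/2 := by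
      field_simp
    linarith [h1, h3]
  set δ : ℝ := c/2 * Real.exp (-C) with hδdef
  have hδ : 0 < δ := by positivity
  have key : ∀ t, (∀ i, |fderiv ℝ ψ (u t) (Pi.single i 1)| < δ) → b ≤ u t j := by
    intro t ht
    by_contra hb
    push_neg at hb
    obtain ⟨i, hi⟩ := Finite.exists_min (u t)
    have hboost := boost hdiff hconv hsym (u t) C hi
    set v : Fin (K-1) → ℝ := fun k => max (u t k) C with hv
    have hvk : ∀ k, um < v k := fun k => lt_of_lt_of_le hum (le_max_right _ _)
    have htl := htail v hvk i
    have hvi : v i = C := by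
      have : u t i < C := lt_of_le_of_lt (hi j) (lt_of_lt_of_le hb hbC)
      simp [hv, max_eq_right this.le]
    have hsum := hsumb v (fun k => le_max_right _ _)
    have hlb : δ ≤ -(fderiv ℝ ψ v (Pi.single i 1)) := by
      have e1 : c * (1/2) * Real.exp (-(v i)) ≤
          c * (1 - ∑ k, Real.exp (-(v k))) * Real.exp (-(v i)) := by
        apply mul_le_mul_of_nonneg_right _ (Real.exp_nonneg _)
        exact mul_le_mul_of_nonneg_left hsum hc.le
      have e2 : δ = c * (1/2) * Real.exp (-(v i)) := by
        rw [hvi, hδdef]; ring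
      linarith [e1.trans htl]
    have hfin : fderiv ℝ ψ (u t) (Pi.single i 1) ≤ -δ := by
      linarith [hboost]
    have := ht i
    rw [abs_lt] at this
    linarith [this.1]
  have hev : ∀ᶠ t in Filter.atTop, ∀ i, |fderiv ℝ ψ (u t) (Pi.single i 1)| < δ := by
    rw [Filter.eventually_all]
    intro i
    have := Metric.tendsto_nhds.mp (hgrad i) δ hδ
    simpa [Real.dist_eq] using this
  exact hev.mono fun t ht => key t ht
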